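/- Let p ∈ (0,1) and let θ' be a non-atomic Borel probability measure on [0,∞) such that 0 is not in the support of θ' (i.e., θ'([0,ε₀]) = 0 for some ε₀ > 0). Then θ = p·δ₀ + (1−p)·θ' is not feasible: there is no complete separable metric space (S,d) with Borel probability measure μ whose distance distribution equals θ. -/

import Mathlib

open MeasureTheory

/-- In a second-countable (pseudo)metric space, almost every point has all of its balls of
positive measure. -/
lemma ae_ball_pos {α : Type*} [PseudoMetricSpace α] [SecondCountableTopology α]
    [MeasurableSpace α] [OpensMeasurableSpace α] (μ : Measure α) :
    ∀ᵐ x ∂μ, ∀ r : ℝ, 0 < r → 0 < μ (Metric.ball x r) := by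
  obtain ⟨B, hBc, -, hB⟩ := TopologicalSpace.exists_countable_basis α
  set U : Set α := ⋃₀ {v ∈ B | μ v = 0} with hU
  have hUnull : μ U = 0 := by
    apply (measure_sUnion_null_iff (hBc.mono (Set.sep_subset _ _))).2
    exact fun v hv => hv.2
  filter_upwards [measure_eq_zero_iff_ae_notMem.mp hUnull] with x hx r hr
  by_contra h
  push_neg at h
  have h0 : μ (Metric.ball x r) = 0 := le_antisymm h zero_le
  obtain ⟨v, hvB, hxv, hvsub⟩ := hB.exists_subset_of_mem_open (Metric.mem_ball_self hr)
    Metric.isOpen_ball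
  exact hx ⟨v, ⟨hvB, measure_mono_null hvsub h0⟩, hxv⟩

/-- Proposition 3 of the paper. Let `p ∈ (0, 1)` and let `θ'` be a
non-atomic Borel probability measure on `[0, ∞)` (a probability measure on `ℝ` giving no
mass to `(-∞, 0)` and to singletons) such that `0` is not in the support of `θ'`, i.e.
`θ' [0, ε₀] = 0` for some `ε₀ > 0`. Then `θ = p • δ₀ + (1 - p) • θ'` is not feasible:
there is no complete separable metric space `(S, d)` with a Borel probability measure `μ`
whose distance distribution (the pushforward of `μ ⊗ μ` under `(x, y) ↦ dist x y`)
equals `θ`. -/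
theorem atom_at_zero_plus_nonatomic_away_from_zero_not_feasible.{u}
    (p : ℝ) (hp : p ∈ Set.Ioo (0 : ℝ) 1)
    (θ' : Measure ℝ) [IsProbabilityMeasure θ']
    (hθ'_nonneg : θ' (Set.Iio 0) = 0)
    (hθ'_nonatomic : ∀ x : ℝ, θ' {x} = 0)
    (ε₀ : ℝ) (hε₀ : 0 < ε₀) (hθ'_supp : θ' (Set.Icc 0 ε₀) = 0) :
    ¬ ∃ (S : Type u) (_ : MetricSpace S) (_ : MeasurableSpace S) (_ : BorelSpace S)
        (μ : Measure S) (_ : IsProbabilityMeasure μ),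
        CompleteSpace S ∧ TopologicalSpace.SeparableSpace S ∧
        (μ.prod μ).map (fun q : S × S => dist q.1 q.2)
          = ENNReal.ofReal p • Measure.dirac (0 : ℝ) + ENNReal.ofReal (1 - p) • θ' := by
  rintro ⟨S, _, _, _, μ, _, hcomp, hsep, hmap⟩
  haveI : SecondCountableTopology S := UniformSpace.secondCountable_of_separable S
  have hd : Measurable (fun q : S × S => dist q.1 q.2) := continuous_dist.measurable
  -- evaluate the distance distribution on measurable sets
  have θeval : ∀ E : Set ℝ, MeasurableSet E →
      (μ.prod μ) ((fun q : S × S => dist q.1 q.2) ⁻¹' E)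
        = ENNReal.ofReal p * Set.indicator E 1 0 + ENNReal.ofReal (1 - p) * θ' E := by
    intro E hE
    rw [← Measure.map_apply hd hE, hmap]
    simp [Measure.dirac_apply' _ hE]
  -- Step A: no mass on pairs at distance in (0, ε₀]
  have hA : (μ.prod μ) ((fun q : S × S => dist q.1 q.2) ⁻¹' Set.Ioc 0 ε₀) = 0 := by
    rw [θeval _ measurableSet_Ioc]
    have h1 : θ' (Set.Ioc 0 ε₀) = 0 :=
      measure_mono_null Set.Ioc_subset_Icc_self hθ'_supp
    have h2 : (0 : ℝ) ∉ Set.Ioc (0:ℝ) ε₀ := by simp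
    rw [Set.indicator_of_notMem h2, h1]
    simp
  -- Step B: for a.e. x, nothing else within distance ε₀
  have hB : ∀ᵐ x ∂μ, μ {y | dist x y ∈ Set.Ioc 0 ε₀} = 0 := by
    have hmA : MeasurableSet ((fun q : S × S => dist q.1 q.2) ⁻¹' Set.Ioc 0 ε₀) :=
      hd measurableSet_Ioc
    rw [Measure.prod_apply hmA] at hA
    have := (lintegral_eq_zero_iff (measurable_measure_prodMk_left hmA)).mp hA
    filter_upwards [this] with x hx
    exact hx
  -- Step C: at most one atom
  have hC : ∀ x y : S, μ {x} ≠ 0 → μ {y} ≠ 0 → x = y := by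
    intro x y hx hy
    by_contra hxy
    have ht : dist x y ≠ 0 := fun h => hxy (by rwa [dist_eq_zero] at h)
    have hsub : ({x} ×ˢ {y} : Set (S × S)) ⊆
        (fun q : S × S => dist q.1 q.2) ⁻¹' {dist x y} := by
      rintro ⟨a, b⟩ ⟨ha, hb⟩
      simp only [Set.mem_singleton_iff] at ha hb
      simp [ha, hb]
    have hpos : 0 < (μ.prod μ) ((fun q : S × S => dist q.1 q.2) ⁻¹' {dist x y}) := by
      calc 0 < μ {x} * μ {y} := by
              exact ENNReal.mul_pos hx hy
        _ = (μ.prod μ) ({x} ×ˢ {y}) := (Measure.prod_prod _ _).symm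
        _ ≤ _ := measure_mono hsub
    rw [θeval _ (measurableSet_singleton _)] at hpos
    rw [Set.indicator_of_notMem (by simpa using (Ne.symm ht)), hθ'_nonatomic] at hpos
    simp at hpos
  -- Step D+E: a.e. x is an atom
  have hE : ∀ᵐ x ∂μ, μ {x} ≠ 0 := by
    filter_upwards [hB, ae_ball_pos μ] with x hx hball
    intro h0
    have hsub : Metric.ball x ε₀ ⊆ {x} ∪ {y | dist x y ∈ Set.Ioc 0 ε₀} := by
      intro y hy
      rcases eq_or_ne y x with rfl | hne
      · exact Or.inl rfl
      · refine Or.inr ⟨?_, le_of_lt ?_⟩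
        · rw [dist_comm]; exact dist_pos.2 hne
        · rw [dist_comm]; exact Metric.mem_ball.mp hy
    have : μ (Metric.ball x ε₀) = 0 := by
      apply measure_mono_null hsub
      exact measure_union_null h0 hx
    exact absurd this (hball ε₀ hε₀).ne'
  -- Step F: μ is a Dirac mass
  obtain ⟨x₀, hx₀⟩ := hE.exists
  have hone : μ {x₀} = 1 := by
    have hae : ∀ᵐ x ∂μ, x ∈ ({x₀} : Set S) := by
      filter_upwards [hE] with x hx
      exact hC x x₀ hx hx₀
    have hcompl : μ ({x₀}ᶜ) = 0 := by
      have h := ae_iff.mp hae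
      have : ({x₀}ᶜ : Set S) = {a | ¬a = x₀} := by ext a; simp
      rw [this]
      simpa using h
    have hadd := measure_add_measure_compl (μ := μ) (measurableSet_singleton x₀)
    rw [hcompl, add_zero] at hadd
    simpa using hadd
  -- Step G: contradiction since θ {0} = p < 1
  have h0 : (μ.prod μ) ((fun q : S × S => dist q.1 q.2) ⁻¹' {(0:ℝ)}) = ENNReal.ofReal p := by
    rw [θeval _ (measurableSet_singleton _)]
    simp [hθ'_nonatomic]
  have hsub : ({x₀} ×ˢ {x₀} : Set (S × S)) ⊆
      (fun q : S × S => dist q.1 q.2) ⁻¹' {(0:ℝ)} := by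
    rintro ⟨a, b⟩ ⟨ha, hb⟩
    simp only [Set.mem_singleton_iff] at ha hb
    simp [ha, hb]
  have hge : (1 : ENNReal) ≤ (μ.prod μ) ((fun q : S × S => dist q.1 q.2) ⁻¹' {(0:ℝ)}) := by
    calc (1 : ENNReal) = μ {x₀} * μ {x₀} := by rw [hone]; norm_num
      _ = (μ.prod μ) ({x₀} ×ˢ {x₀}) := (Measure.prod_prod _ _).symm
      _ ≤ _ := measure_mono hsub
  rw [h0] at hge
  have : ENNReal.ofReal p < 1 := by
    rw [show (1 : ENNReal) = ENNReal.ofReal 1 by simp]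
    exact (ENNReal.ofReal_lt_ofReal_iff one_pos).mpr hp.2
  exact absurd hge this.not_ge
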